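/- Let A be a Banach algebra and U a Banach A-bimodule. If every derivation on the module extension Banach algebra T(A,U) is continuous, then every derivation δ : A → U is continuous. -/

import Mathlib

/-- Multiplication of the module extension (trivial extension) algebra `T(A,U) = A × U`:
`(a,u)(b,v) = (ab, a·v + u·b)`. Here `l` and `r` are the (continuous bilinear) left and right
actions of the Banach algebra `A` on the Banach `A`-bimodule `U`, and the ℓ¹-norm on `A × U`
induces the product topology. -/
noncomputable def trivMul {A U : Type*} [NonUnitalNormedRing A] [NormedSpace ℂ A]
    [NormedAddCommGroup U] [NormedSpace ℂ U]
    (l : A →L[ℂ] U →L[ℂ] U) (r : U →L[ℂ] A →L[ℂ] U) (x y : A × U) : A × U :=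
  (x.1 * y.1, l x.1 y.2 + r x.2 y.1)

theorem stmt5
    {A U : Type*}
    [NonUnitalNormedRing A] [NormedSpace ℂ A] [IsScalarTower ℂ A A] [SMulCommClass ℂ A A]
    [CompleteSpace A]
    [NormedAddCommGroup U] [NormedSpace ℂ U] [CompleteSpace U]
    (l : A →L[ℂ] U →L[ℂ] U) (r : U →L[ℂ] A →L[ℂ] U)
    (hl : ∀ (a b : A) (u : U), l (a * b) u = l a (l b u))
    (hr : ∀ (u : U) (a b : A), r u (a * b) = r (r u a) b)
    (hlr : ∀ (a : A) (u : U) (b : A), r (l a u) b = l a (r u b))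
    -- every derivation on `T(A,U)` is continuous:
    (hT : ∀ D : (A × U) →ₗ[ℂ] (A × U),
      (∀ x y : A × U, D (trivMul l r x y) = trivMul l r x (D y) + trivMul l r (D x) y) →
        Continuous D) :
    -- every derivation `δ : A → U` is continuous:
    ∀ δ : A →ₗ[ℂ] U, (∀ a b : A, δ (a * b) = l a (δ b) + r (δ a) b) → Continuous δ := by
  intro δ hδ
  have hD := hT ((LinearMap.inr ℂ A U).comp (δ.comp (LinearMap.fst ℂ A U)))
    (by
      intro x y
      simp only [LinearMap.comp_apply, LinearMap.fst_apply, LinearMap.inr_apply, trivMul]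
      ext
      · simp
      · simp [hδ x.1 y.1])
  have : Continuous fun a : A => ((LinearMap.inr ℂ A U).comp
      (δ.comp (LinearMap.fst ℂ A U)) (a, (0 : U))).2 :=
    (continuous_snd.comp hD).comp (Continuous.prodMk_left (0 : U))
  simpa using this
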